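/- Let h be a symmetric bilinear map on ℝⁿ with values in a 2-dimensional Lorentzian space spanned by light-like vectors θ, ξ with ⟨θ,ξ⟩ = -1, ⟨θ,θ⟩ = ⟨ξ,ξ⟩ = 0, given on an orthonormal basis by h(e₁,e₁) = μθ, h(e₁,e_a) = ν_a θ, h(e_a,e_a) = -β_a θ + ξ, h(e_a,e_b) = 0 for 2 ≤ a ≠ b ≤ n. If ⟨h(X,X), h(X,X)⟩ = λ for every unit vector X, then λ = 0 and β_a = 0 for all a = 2,...,n when n = 2; and in general λ = 0. -/

import Mathlib

/-- Lorentzian form on the coefficient space `span{θ,ξ}`, where a pair `(p,q)`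
represents `pθ + qξ` with `⟨θ,θ⟩ = ⟨ξ,ξ⟩ = 0` and `⟨θ,ξ⟩ = -1`. -/
noncomputable def ipθξ (v w : ℝ × ℝ) : ℝ := -(v.1 * w.2) - v.2 * w.1

lemma single_unit (n : ℕ) (j : Fin n) :
    ∑ i, (Pi.single (M := fun _ => ℝ) j 1 i) ^ 2 = 1 := by
  rw [Finset.sum_eq_single j]
  · simp
  · intro b _ hb
    simp [Pi.single_apply, hb]
  · simp

theorem stmt_16 (n : ℕ) (hn : 2 ≤ n)
    (h : (Fin n → ℝ) →ₗ[ℝ] (Fin n → ℝ) →ₗ[ℝ] ℝ × ℝ)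
    (hsymm : ∀ x y, h x y = h y x)
    (e : Fin n → Fin n → ℝ) (he : e = fun i => Pi.single i 1)
    (μ : ℝ) (ν β : Fin n → ℝ) (e₁ : Fin n) (he₁ : e₁ = ⟨0, by omega⟩)
    (h11 : h (e e₁) (e e₁) = (μ, 0))
    (h1a : ∀ a, a ≠ e₁ → h (e e₁) (e a) = (ν a, 0))
    (haa : ∀ a, a ≠ e₁ → h (e a) (e a) = (-(β a), 1))
    (hab : ∀ a b, a ≠ e₁ → b ≠ e₁ → a ≠ b → h (e a) (e b) = 0)
    (lam : ℝ)
    (hiso : ∀ X : Fin n → ℝ, ∑ i, (X i) ^ 2 = 1 → ipθξ (h X X) (h X X) = lam) :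
    lam = 0 ∧ (n = 2 → ∀ a, a ≠ e₁ → β a = 0) := by
  have hunit : ∀ j : Fin n, ∑ i, (e j i) ^ 2 = 1 := by
    intro j; rw [he]; exact single_unit n j
  have h0 : lam = 0 := by
    have := hiso (e e₁) (hunit e₁)
    rw [h11] at this
    simpa [ipθξ] using this.symm
  refine ⟨h0, fun _ a ha => ?_⟩
  have := hiso (e a) (hunit a)
  rw [haa a ha] at this
  simp only [ipθξ, h0] at this
  linarith
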